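/- Let 1 ≤ k ≤ n−1. An array T = (T_{i,j})_{1≤i<j≤n} with entries in ℤ_{≥0} belongs to Π_{ω_k} (i.e., T_{i,j} ≥ 0 and S(T,d) ≤ M(ω_k,d) for every Dyck path d) if and only if: (i) all T_{i,j} ∈ {0,1}; (ii) T_{i,j} = 1 implies i ≤ k and j ≥ k+1; (iii) the set of pairs (i,j) with T_{i,j} = 1 is an antichain with respect to the componentwise order (i,j) ≤ (i',j') ⇔ i ≤ i' and j ≤ j'. -/

import Mathlib

open Finset Pointwise

/-- A Dyck path in the FFLV sense: a sequence of pairs `(i,j)` with `1 ≤ i < j ≤ n`,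
starting and ending on the top row (`j = i + 1`), each step moving to the
upper-right or bottom-right neighbour. -/
structure DyckPath (n : ℕ) where
  toList : List (ℕ × ℕ)
  nonempty : toList ≠ []
  bounds : ∀ p ∈ toList, 1 ≤ p.1 ∧ p.1 < p.2 ∧ p.2 ≤ n
  first_eq : (toList.head nonempty).2 = (toList.head nonempty).1 + 1
  last_eq : (toList.getLast nonempty).2 = (toList.getLast nonempty).1 + 1
  step : toList.Chain' (fun p q => q = (p.1 + 1, p.2) ∨ q = (p.1, p.2 + 1))

/-- `S(x,d)`: the sum of the entries of `x` along the Dyck path `d`. -/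
def DyckPath.S {n : ℕ} {α : Type*} [AddCommMonoid α] (d : DyckPath n) (x : ℕ → ℕ → α) : α :=
  (d.toList.map fun p => x p.1 p.2).sum

/-- `M(λ,d) = a_{i_1} + … + a_{i_N}` for the weight `λ = Σ a_i ω_i`. -/
def DyckPath.M {n : ℕ} (d : DyckPath n) (a : ℕ → ℕ) : ℕ :=
  ∑ i ∈ Finset.Icc (d.toList.head d.nonempty).1 (d.toList.getLast d.nonempty).1, a i

namespace Stmt5Aux

/-- Componentwise order with strictly increasing coordinate sum. -/
def R (p q : ℕ × ℕ) : Prop := p.1 ≤ q.1 ∧ p.2 ≤ q.2 ∧ p.1 + p.2 < q.1 + q.2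

instance : IsTrans (ℕ × ℕ) R := by
  constructor
  rintro p q r ⟨a, b, c⟩ ⟨d, e, f⟩
  exact ⟨by omega, by omega, by omega⟩

lemma le_sum_map_range' (g : ℕ → ℕ) : ∀ (len a s : ℕ), a ≤ s → s < a + len →
    g s ≤ ((List.range' a len).map g).sum := by
  intro len
  induction len with
  | zero => intro a s h1 h2; omega
  | succ m ih =>
    intro a s h1 h2
    rw [List.range'_succ, List.map_cons, List.sum_cons]
    rcases eq_or_lt_of_le h1 with rfl | h
    · exact Nat.le_add_right _ _
    · have := ih (a + 1) s (by omega) (by omega); omega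

lemma two_le_sum_map_range' (g : ℕ → ℕ) : ∀ (len a s1 s2 : ℕ), a ≤ s1 → s1 < s2 →
    s2 < a + len → g s1 + g s2 ≤ ((List.range' a len).map g).sum := by
  intro len
  induction len with
  | zero => intro a s1 s2 _ _ _; omega
  | succ m ih =>
    intro a s1 s2 h1 h12 h2
    rw [List.range'_succ, List.map_cons, List.sum_cons]
    rcases eq_or_lt_of_le h1 with rfl | h
    · have := le_sum_map_range' g m (a + 1) s2 (by omega) (by omega); omega
    · have := ih (a + 1) s1 s2 (by omega) h12 (by omega); omega

lemma chain'_map_range' {α : Type*} {Rel : α → α → Prop} (f : ℕ → α) :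
    ∀ (len a : ℕ), (∀ m, a ≤ m → m + 1 < a + len → Rel (f m) (f (m + 1))) →
    List.Chain' Rel ((List.range' a len).map f) := by
  intro len
  induction len with
  | zero => intro a _; exact List.isChain_nil
  | succ m ih =>
    intro a h
    rw [List.range'_succ, List.map_cons]
    cases m with
    | zero => exact List.isChain_singleton _
    | succ m' =>
      rw [List.range'_succ, List.map_cons, List.Chain', List.isChain_cons_cons]
      refine ⟨h a le_rfl (by omega), ?_⟩
      have := ih (a + 1) (fun m hm hm2 => h m (by omega) (by omega))
      rwa [List.range'_succ, List.map_cons] at this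

/-- The staircase path through `(i,j)` and `(i',j')`, parameterized by coordinate sum. -/
def pf (i i' j j' : ℕ) (s : ℕ) : ℕ × ℕ :=
  if s ≤ i + j then (i, s - i)
  else if s ≤ i' + j then (s - j, j)
  else if s ≤ i' + j' then (i', s - i')
  else (s - j', j')

lemma pf_eval_head {i i' j j' : ℕ} (h1 : 1 ≤ i) (h2 : i ≤ i') (h3 : i' < j) (h4 : j ≤ j') :
    pf i i' j j' (2 * i + 1) = (i, i + 1) := by
  unfold pf; split_ifs <;> simp only [Prod.mk.injEq, true_and, and_true, true_or, or_true] <;> first | trivial | omega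

lemma pf_eval_last {i i' j j' : ℕ} (h1 : 1 ≤ i) (h2 : i ≤ i') (h3 : i' < j) (h4 : j ≤ j') :
    pf i i' j j' (2 * j' - 1) = (j' - 1, j') := by
  unfold pf; split_ifs <;> simp only [Prod.mk.injEq, true_and, and_true, true_or, or_true] <;> first | trivial | omega

lemma pf_eval_fst {i i' j j' : ℕ} (h1 : 1 ≤ i) (h2 : i ≤ i') (h3 : i' < j) (h4 : j ≤ j') :
    pf i i' j j' (i + j) = (i, j) := by
  unfold pf; split_ifs <;> simp only [Prod.mk.injEq, true_and, and_true, true_or, or_true] <;> first | trivial | omega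

lemma pf_eval_snd {i i' j j' : ℕ} (h1 : 1 ≤ i) (h2 : i ≤ i') (h3 : i' < j) (h4 : j ≤ j') :
    pf i i' j j' (i' + j') = (i', j') := by
  unfold pf; split_ifs <;> simp only [Prod.mk.injEq, true_and, and_true, true_or, or_true] <;> first | trivial | omega

lemma pf_step {i i' j j' : ℕ} (h1 : 1 ≤ i) (h2 : i ≤ i') (h3 : i' < j) (h4 : j ≤ j')
    (s : ℕ) (hs : 2 * i + 1 ≤ s) (hs' : s + 1 < 2 * j') :
    pf i i' j j' (s + 1) = ((pf i i' j j' s).1 + 1, (pf i i' j j' s).2) ∨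
    pf i i' j j' (s + 1) = ((pf i i' j j' s).1, (pf i i' j j' s).2 + 1) := by
  unfold pf; split_ifs <;> simp only [Prod.mk.injEq, true_and, and_true, true_or, or_true] <;> first | trivial | omega

lemma pf_bounds {n i i' j j' : ℕ} (h1 : 1 ≤ i) (h2 : i ≤ i') (h3 : i' < j) (h4 : j ≤ j')
    (h5 : j' ≤ n) (s : ℕ) (hs : 2 * i + 1 ≤ s) (hs' : s < 2 * j') :
    1 ≤ (pf i i' j j' s).1 ∧ (pf i i' j j' s).1 < (pf i i' j j' s).2 ∧
      (pf i i' j j' s).2 ≤ n := by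
  unfold pf; split_ifs <;> simp only [] <;> omega

/-- The Dyck path through `(i,j)` and `(i',j')`. -/
def dp {n i i' j j' : ℕ} (h1 : 1 ≤ i) (h2 : i ≤ i') (h3 : i' < j) (h4 : j ≤ j')
    (h5 : j' ≤ n) : DyckPath n where
  toList := (List.range' (2 * i + 1) (2 * j' - 1 - 2 * i)).map (pf i i' j j')
  nonempty := by
    intro h
    have hlen : ((List.range' (2 * i + 1) (2 * j' - 1 - 2 * i)).map (pf i i' j j')).length
        = 2 * j' - 1 - 2 * i := by simp
    rw [h] at hlen
    simp at hlen
    omega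
  bounds := by
    intro p hp
    rw [List.mem_map] at hp
    obtain ⟨s, hs, rfl⟩ := hp
    rw [List.mem_range'] at hs
    obtain ⟨t, ht, rfl⟩ := hs
    exact pf_bounds h1 h2 h3 h4 h5 _ (by omega) (by omega)
  first_eq := by
    have hh : ((List.range' (2 * i + 1) (2 * j' - 1 - 2 * i)).map (pf i i' j j')).head? =
        some (i, i + 1) := by
      obtain ⟨m, hm⟩ : ∃ m, 2 * j' - 1 - 2 * i = m + 1 := ⟨2 * j' - 2 - 2 * i, by omega⟩
      rw [hm, List.range'_succ, List.map_cons, List.head?_cons, pf_eval_head h1 h2 h3 h4]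
    have hne : ((List.range' (2 * i + 1) (2 * j' - 1 - 2 * i)).map (pf i i' j j')) ≠ [] := by
      intro h; rw [h] at hh; simp at hh
    rw [List.head?_eq_head hne, Option.some_inj] at hh
    rw [hh]
  last_eq := by
    have hh : ((List.range' (2 * i + 1) (2 * j' - 1 - 2 * i)).map (pf i i' j j')).getLast? =
        some (j' - 1, j') := by
      obtain ⟨m, hm⟩ : ∃ m, 2 * j' - 1 - 2 * i = m + 1 := ⟨2 * j' - 2 - 2 * i, by omega⟩
      rw [hm, List.range'_concat, List.map_append]
      simp only [List.map_cons, List.map_nil, List.getLast?_concat]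
      have he : 2 * i + 1 + 1 * m = 2 * j' - 1 := by omega
      rw [he, pf_eval_last h1 h2 h3 h4]
    have hne : ((List.range' (2 * i + 1) (2 * j' - 1 - 2 * i)).map (pf i i' j j')) ≠ [] := by
      intro h; rw [h] at hh; simp at hh
    rw [List.getLast?_eq_getLast hne, Option.some_inj] at hh
    rw [hh]
    show j' = j' - 1 + 1
    omega
  step := by
    apply chain'_map_range'
    intro m hm hm'
    exact pf_step h1 h2 h3 h4 m hm (by omega)

lemma dp_toList {n i i' j j' : ℕ} (h1 : 1 ≤ i) (h2 : i ≤ i') (h3 : i' < j) (h4 : j ≤ j')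
    (h5 : j' ≤ n) : (dp (n := n) h1 h2 h3 h4 h5).toList =
    (List.range' (2 * i + 1) (2 * j' - 1 - 2 * i)).map (pf i i' j j') := rfl

lemma dp_head {n i i' j j' : ℕ} (h1 : 1 ≤ i) (h2 : i ≤ i') (h3 : i' < j) (h4 : j ≤ j')
    (h5 : j' ≤ n) :
    ((dp (n := n) h1 h2 h3 h4 h5).toList.head (dp h1 h2 h3 h4 h5).nonempty) = (i, i + 1) := by
  have hh : ((dp (n := n) h1 h2 h3 h4 h5).toList).head? = some (i, i + 1) := by
    rw [dp_toList]
    obtain ⟨m, hm⟩ : ∃ m, 2 * j' - 1 - 2 * i = m + 1 := ⟨2 * j' - 2 - 2 * i, by omega⟩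
    rw [hm, List.range'_succ, List.map_cons, List.head?_cons, pf_eval_head h1 h2 h3 h4]
  rw [List.head?_eq_head (dp h1 h2 h3 h4 h5).nonempty, Option.some_inj] at hh
  exact hh

lemma dp_last {n i i' j j' : ℕ} (h1 : 1 ≤ i) (h2 : i ≤ i') (h3 : i' < j) (h4 : j ≤ j')
    (h5 : j' ≤ n) :
    ((dp (n := n) h1 h2 h3 h4 h5).toList.getLast (dp h1 h2 h3 h4 h5).nonempty)
      = (j' - 1, j') := by
  have hh : ((dp (n := n) h1 h2 h3 h4 h5).toList).getLast? = some (j' - 1, j') := by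
    rw [dp_toList]
    obtain ⟨m, hm⟩ : ∃ m, 2 * j' - 1 - 2 * i = m + 1 := ⟨2 * j' - 2 - 2 * i, by omega⟩
    rw [hm, List.range'_concat, List.map_append]
    simp only [List.map_cons, List.map_nil, List.getLast?_concat]
    have he : 2 * i + 1 + 1 * m = 2 * j' - 1 := by omega
    rw [he, pf_eval_last h1 h2 h3 h4]
  rw [List.getLast?_eq_getLast (dp h1 h2 h3 h4 h5).nonempty, Option.some_inj] at hh
  exact hh

lemma dp_M {n i i' j j' : ℕ} (h1 : 1 ≤ i) (h2 : i ≤ i') (h3 : i' < j) (h4 : j ≤ j')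
    (h5 : j' ≤ n) (k : ℕ) :
    (dp (n := n) h1 h2 h3 h4 h5).M (fun m => if m = k then 1 else 0)
      = if k ∈ Finset.Icc i (j' - 1) then 1 else 0 := by
  unfold DyckPath.M
  rw [dp_head h1 h2 h3 h4 h5, dp_last h1 h2 h3 h4 h5]
  exact Finset.sum_ite_eq' _ _ (fun _ => 1)

lemma dp_S_fst {n i i' j j' : ℕ} (h1 : 1 ≤ i) (h2 : i ≤ i') (h3 : i' < j) (h4 : j ≤ j')
    (h5 : j' ≤ n) (T : ℕ → ℕ → ℕ) : T i j ≤ (dp (n := n) h1 h2 h3 h4 h5).S T := by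
  unfold DyckPath.S
  rw [dp_toList, List.map_map]
  have := le_sum_map_range' ((fun p : ℕ × ℕ => T p.1 p.2) ∘ pf i i' j j')
    (2 * j' - 1 - 2 * i) (2 * i + 1) (i + j) (by omega) (by omega)
  simp only [Function.comp_apply, pf_eval_fst h1 h2 h3 h4] at this
  exact this

lemma dp_S_both {n i i' j j' : ℕ} (h1 : 1 ≤ i) (h2 : i ≤ i') (h3 : i' < j) (h4 : j ≤ j')
    (h5 : j' ≤ n) (T : ℕ → ℕ → ℕ) (hlt : i + j < i' + j') :
    T i j + T i' j' ≤ (dp (n := n) h1 h2 h3 h4 h5).S T := by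
  unfold DyckPath.S
  rw [dp_toList, List.map_map]
  have := two_le_sum_map_range' ((fun p : ℕ × ℕ => T p.1 p.2) ∘ pf i i' j j')
    (2 * j' - 1 - 2 * i) (2 * i + 1) (i + j) (i' + j') (by omega) hlt (by omega)
  simp only [Function.comp_apply, pf_eval_fst h1 h2 h3 h4, pf_eval_snd h1 h2 h3 h4] at this
  exact this

lemma sum_le_one (T : ℕ → ℕ → ℕ) :
    ∀ l : List (ℕ × ℕ), l.Pairwise R →
    (∀ p ∈ l, T p.1 p.2 ≤ 1) →
    (∀ p ∈ l, ∀ q ∈ l, R p q → T p.1 p.2 = 1 → T q.1 q.2 = 1 → False) →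
    (l.map fun p => T p.1 p.2).sum ≤ 1 := by
  intro l
  induction l with
  | nil => simp
  | cons p l ih =>
    intro hpw hle hanti
    rw [List.pairwise_cons] at hpw
    rw [List.map_cons, List.sum_cons]
    by_cases hp : T p.1 p.2 = 1
    · have hz : ∀ q ∈ l, T q.1 q.2 = 0 := by
        intro q hq
        have hq1 := hle q (List.mem_cons_of_mem _ hq)
        by_contra h
        exact hanti p List.mem_cons_self q (List.mem_cons_of_mem _ hq)
          (hpw.1 q hq) hp (by omega)
      have hsum : (l.map fun p => T p.1 p.2).sum = 0 := by
        apply List.sum_eq_zero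
        intro x hx
        rw [List.mem_map] at hx
        obtain ⟨q, hq, rfl⟩ := hx
        exact hz q hq
      omega
    · have hp0 : T p.1 p.2 = 0 := by have := hle p List.mem_cons_self; omega
      have := ih hpw.2 (fun q hq => hle q (List.mem_cons_of_mem _ hq))
        (fun q hq r hr => hanti q (List.mem_cons_of_mem _ hq) r (List.mem_cons_of_mem _ hr))
      omega

end Stmt5Aux

/-- Characterization of `Π_{ω_k}`: 0/1 arrays supported on `i ≤ k < j` whose support
is an antichain in the componentwise order. -/
theorem stmt5 (n k : ℕ) (hn : 2 ≤ n) (hk1 : 1 ≤ k) (hk : k ≤ n - 1) (T : ℕ → ℕ → ℕ) :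
    (∀ d : DyckPath n, d.S T ≤ d.M (fun i => if i = k then 1 else 0)) ↔
    ((∀ i j, 1 ≤ i → i < j → j ≤ n → T i j ≤ 1) ∧
     (∀ i j, 1 ≤ i → i < j → j ≤ n → T i j = 1 → i ≤ k ∧ k + 1 ≤ j) ∧
     (∀ i j i' j', 1 ≤ i → i < j → j ≤ n → 1 ≤ i' → i' < j' → j' ≤ n →
       T i j = 1 → T i' j' = 1 → i ≤ i' → j ≤ j' → i = i' ∧ j = j')) := by
  open Stmt5Aux in
  constructor
  · intro hP
    have hb1 : ∀ i j, 1 ≤ i → i < j → j ≤ n → T i j ≤ 1 := by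
      intro i j hi hij hjn
      have hS := dp_S_fst (n := n) hi le_rfl hij le_rfl hjn T
      have hM := dp_M (n := n) hi le_rfl hij le_rfl hjn k
      have := hP (dp hi le_rfl hij le_rfl hjn)
      rw [hM] at this
      split_ifs at this <;> omega
    have hb2 : ∀ i j, 1 ≤ i → i < j → j ≤ n → T i j = 1 → i ≤ k ∧ k + 1 ≤ j := by
      intro i j hi hij hjn hT
      by_contra hcon
      have hS := dp_S_fst (n := n) hi le_rfl hij le_rfl hjn T
      have hM := dp_M (n := n) hi le_rfl hij le_rfl hjn k
      have := hP (dp hi le_rfl hij le_rfl hjn)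
      rw [hM] at this
      have hnotmem : k ∉ Finset.Icc i (j - 1) := by
        rw [Finset.mem_Icc]
        omega
      rw [if_neg hnotmem] at this
      omega
    refine ⟨hb1, hb2, ?_⟩
    intro i j i' j' hi hij hjn hi' hij' hj'n hT hT' hii' hjj'
    by_contra hcon
    have hlt : i + j < i' + j' := by
      rcases Nat.lt_or_ge (i + j) (i' + j') with h | h
      · exact h
      · exfalso; exact hcon ⟨by omega, by omega⟩
    have hik := hb2 i j hi hij hjn hT
    have hik' := hb2 i' j' hi' hij' hj'n hT'
    have h3 : i' < j := by omega
    have hS := dp_S_both (n := n) hi hii' h3 hjj' hj'n T hlt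
    have hM := dp_M (n := n) hi hii' h3 hjj' hj'n k
    have := hP (dp hi hii' h3 hjj' hj'n)
    rw [hM] at this
    split_ifs at this <;> omega
  · rintro ⟨hb1, hb2, hanti⟩ d
    have hchain : d.toList.Chain' R := by
      apply d.step.imp
      intro p q hpq
      rcases hpq with rfl | rfl
      · exact ⟨by omega, by omega, by omega⟩
      · exact ⟨by omega, by omega, by omega⟩
    have hpw : d.toList.Pairwise R := List.isChain_iff_pairwise.mp hchain
    have hle : ∀ p ∈ d.toList, T p.1 p.2 ≤ 1 := by
      intro p hp
      obtain ⟨hp1, hp2, hp3⟩ := d.bounds p hp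
      exact hb1 p.1 p.2 hp1 hp2 hp3
    have hanti' : ∀ p ∈ d.toList, ∀ q ∈ d.toList, R p q →
        T p.1 p.2 = 1 → T q.1 q.2 = 1 → False := by
      intro p hp q hq hR hTp hTq
      obtain ⟨hp1, hp2, hp3⟩ := d.bounds p hp
      obtain ⟨hq1, hq2, hq3⟩ := d.bounds q hq
      obtain ⟨e1, e2⟩ := hanti p.1 p.2 q.1 q.2 hp1 hp2 hp3 hq1 hq2 hq3 hTp hTq hR.1 hR.2.1
      have := hR.2.2
      omega
    have hS1 : d.S T ≤ 1 := sum_le_one T d.toList hpw hle hanti'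
    by_cases hS0 : d.S T = 0
    · rw [hS0]; exact Nat.zero_le _
    · have hex : ∃ p ∈ d.toList, T p.1 p.2 = 1 := by
        by_contra h
        push_neg at h
        apply hS0
        apply List.sum_eq_zero
        intro x hx
        rw [List.mem_map] at hx
        obtain ⟨q, hq, rfl⟩ := hx
        have := hle q hq
        have := h q hq
        omega
      obtain ⟨p, hpmem, hTp⟩ := hex
      obtain ⟨hp1, hp2, hp3⟩ := d.bounds p hpmem
      obtain ⟨hpk, hkp⟩ := hb2 p.1 p.2 hp1 hp2 hp3 hTp
      have hhead : (d.toList.head d.nonempty).1 ≤ p.1 := by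
        have hcons := List.cons_head_tail d.nonempty
        have hpw2 : (d.toList.head d.nonempty :: d.toList.tail).Pairwise R := by
          rw [hcons]; exact hpw
        rw [List.pairwise_cons] at hpw2
        have hmem : p ∈ d.toList.head d.nonempty :: d.toList.tail := by
          rw [hcons]; exact hpmem
        rcases List.mem_cons.mp hmem with h | h
        · rw [h]
        · exact (hpw2.1 p h).1
      have hlast : p.2 ≤ (d.toList.getLast d.nonempty).2 := by
        have hcons := List.dropLast_append_getLast d.nonempty
        have hpw2 : (d.toList.dropLast ++ [d.toList.getLast d.nonempty]).Pairwise R := by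
          rw [hcons]; exact hpw
        rw [List.pairwise_append] at hpw2
        have hmem : p ∈ d.toList.dropLast ++ [d.toList.getLast d.nonempty] := by
          rw [hcons]; exact hpmem
        rcases List.mem_append.mp hmem with h | h
        · exact (hpw2.2.2 p h _ (List.mem_singleton_self _)).2.1
        · rw [List.mem_singleton] at h; rw [h]
      have hlast1 : k ≤ (d.toList.getLast d.nonempty).1 := by
        have := d.last_eq
        omega
      have hM : d.M (fun i => if i = k then 1 else 0) = 1 := by
        unfold DyckPath.M
        rw [Finset.sum_ite_eq' _ _ (fun _ => 1)]
        rw [if_pos]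
        rw [Finset.mem_Icc]
        exact ⟨le_trans hhead hpk, hlast1⟩
      rw [hM]
      exact hS1
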